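/- In the category Weil, the object Wⁿ := ℕ[x₁,…,xₙ]/(xᵢxⱼ : 1 ≤ i,j ≤ n) (all pairwise products of generators zero), together with the n projections Wⁿ → W = ℕ[x]/(x²) sending x_k ↦ x and xᵢ ↦ 0 for i ≠ k, is the categorical product of n copies of W. -/

import Mathlib

open MvPolynomial

/-- A presentation of a Weil-algebra: a finite set of generators together with a
reflexive symmetric relation `sim`; the algebra is `ℕ[xᵢ]/(xᵢxⱼ : sim i j)`. -/
structure WeilPres where
  ι : Type
  fintypeI : Fintype ι
  sim : ι → ι → Prop
  refl : ∀ i, sim i i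
  symm : ∀ i j, sim i j → sim j i

attribute [instance] WeilPres.fintypeI

/-- The underlying commutative semiring `ℕ[x₁,…,xₙ]/(xᵢxⱼ : i ∼ j)` of a Weil presentation. -/
def WeilPres.Carrier (P : WeilPres) : Type :=
  (ringConGen fun p q : MvPolynomial P.ι ℕ =>
    ∃ i j, P.sim i j ∧ p = X i * X j ∧ q = 0).Quotient

noncomputable instance (P : WeilPres) : CommSemiring P.Carrier :=
  inferInstanceAs (CommSemiring (RingCon.Quotient _))

/-- The generator `xᵢ` of the Weil-algebra presented by `P`. -/
noncomputable def WeilPres.gen (P : WeilPres) (i : P.ι) : P.Carrier :=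
  RingCon.mk' _ (X i)

/-- Tensor product (coproduct) of Weil presentations: concatenation of generators. -/
def WeilPres.tensor (P Q : WeilPres) : WeilPres where
  ι := P.ι ⊕ Q.ι
  fintypeI := inferInstance
  sim := Sum.LiftRel P.sim Q.sim
  refl i := by cases i with
    | inl a => exact Sum.LiftRel.inl (P.refl a)
    | inr a => exact Sum.LiftRel.inr (Q.refl a)
  symm i j h := by cases h with
    | inl h => exact Sum.LiftRel.inl (P.symm _ _ h)
    | inr h => exact Sum.LiftRel.inr (Q.symm _ _ h)

/-- `Wⁿ = ℕ[x₁,…,xₙ]/(xᵢxⱼ)`: all pairwise products of generators vanish. -/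
def WnPres (n : ℕ) : WeilPres where
  ι := Fin n
  fintypeI := inferInstance
  sim _ _ := True
  refl _ := trivial
  symm _ _ _ := trivial

/-- `ℕ` itself, as the Weil-algebra with no generators. -/
def NPres : WeilPres where
  ι := Empty
  fintypeI := inferInstance
  sim _ _ := True
  refl _ := trivial
  symm _ _ _ := trivial

-- auxiliary

private lemma relLift {R S : Type*} [NonAssocSemiring R] [NonAssocSemiring S]
    {r : R → R → Prop} (f : R →+* S) (H : ∀ a b, r a b → f a = f b) :
    ∀ {a b}, RingConGen.Rel r a b → f a = f b := by
  intro a b h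
  induction h with
  | of x y h => exact H x y h
  | refl x => rfl
  | symm _ ih => exact ih.symm
  | trans _ _ ih1 ih2 => exact ih1.trans ih2
  | add _ _ ih1 ih2 => rw [map_add, map_add, ih1, ih2]
  | mul _ _ ih1 ih2 => rw [map_mul, map_mul, ih1, ih2]

noncomputable def WeilPres.liftHom (P : WeilPres) {S : Type*} [Semiring S]
    (f : MvPolynomial P.ι ℕ →+* S)
    (hf : ∀ i j, P.sim i j → f (X i * X j) = 0) :
    P.Carrier →+* S where
  toFun := Quotient.lift f (fun a b h => relLift f
    (fun _ _ hab => by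
      obtain ⟨i, j, hij, ha, hb⟩ := hab
      subst ha; subst hb; simpa using hf i j hij) h)
  map_one' := map_one f
  map_zero' := map_zero f
  map_add' := Quotient.ind₂ fun a b => map_add f a b
  map_mul' := Quotient.ind₂ fun a b => map_mul f a b

lemma WeilPres.liftHom_mk (P : WeilPres) {S : Type*} [Semiring S]
    (f : MvPolynomial P.ι ℕ →+* S)
    (hf : ∀ i j, P.sim i j → f (X i * X j) = 0) (p : MvPolynomial P.ι ℕ) :
    P.liftHom f hf (RingCon.mk' _ p) = f p := rfl

lemma WeilPres.liftHom_gen (P : WeilPres) {S : Type*} [Semiring S]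
    (f : MvPolynomial P.ι ℕ →+* S)
    (hf : ∀ i j, P.sim i j → f (X i * X j) = 0) (i : P.ι) :
    P.liftHom f hf (P.gen i) = f (X i) := rfl

lemma WeilPres.gen_mul (P : WeilPres) {i j : P.ι} (h : P.sim i j) :
    P.gen i * P.gen j = 0 := by
  show (RingCon.mk' _ (X i)) * (RingCon.mk' _ (X j)) = RingCon.mk' _ (0 : MvPolynomial P.ι ℕ)
  show RingCon.mk' _ (X i * X j) = RingCon.mk' _ (0 : MvPolynomial P.ι ℕ)
  exact (RingCon.eq _).mpr (RingConGen.Rel.of _ _ ⟨i, j, h, rfl, rfl⟩)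

lemma WeilPres.hom_ext (P : WeilPres) {S : Type*} [CommSemiring S] {g₁ g₂ : P.Carrier →+* S}
    (h : ∀ i, g₁ (P.gen i) = g₂ (P.gen i)) : g₁ = g₂ := by
  have key : g₁.comp (RingCon.mk' _) = g₂.comp (RingCon.mk' _) := by
    apply MvPolynomial.ringHom_ext
    · intro a
      simp [show ((C a : MvPolynomial P.ι ℕ)) = (a : MvPolynomial P.ι ℕ) by
        simp [MvPolynomial.C_eq_coe_nat], map_natCast]
    · intro i
      exact h i
  ext x
  induction x using Quotient.ind with
  | _ p => exact RingHom.congr_fun key p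

/-- uniqueness of ring homs to ℕ -/
lemma WeilPres.hom_nat_unique (P : WeilPres) (g₁ g₂ : P.Carrier →+* ℕ) : g₁ = g₂ := by
  apply P.hom_ext
  intro i
  have key : ∀ g : P.Carrier →+* ℕ, g (P.gen i) = 0 := by
    intro g
    have := congrArg g (P.gen_mul (P.refl i))
    rw [map_mul, map_zero] at this
    exact mul_self_eq_zero.mp this
  rw [key g₁, key g₂]


open TrivSqZeroExt

noncomputable abbrev Tn (n : ℕ) := TrivSqZeroExt ℕ (Fin n → ℕ)

/-- forward map `Wⁿ → Tn n` -/
noncomputable def wnFwd (n : ℕ) : (WnPres n).Carrier →+* Tn n :=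
  (WnPres n).liftHom
    (MvPolynomial.eval₂Hom (Nat.castRingHom (Tn n)) (fun i => inr (Pi.single i 1)))
    (fun i j _ => by simp [inr_mul_inr])

lemma wnFwd_gen (n : ℕ) (i : Fin n) : wnFwd n ((WnPres n).gen i) = inr (Pi.single i 1) := by
  rw [wnFwd]
  exact (WeilPres.liftHom_gen (WnPres n) _ _ i).trans (MvPolynomial.eval₂Hom_X' _ _ _)

/-- backward linear map -/
noncomputable def wnBwdLin (n : ℕ) : (Fin n → ℕ) →ₗ[ℕ] (WnPres n).Carrier :=
  ∑ i : Fin n, LinearMap.smulRight (LinearMap.proj i) ((WnPres n).gen i)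

lemma wnBwdLin_apply (n : ℕ) (b : Fin n → ℕ) :
    wnBwdLin n b = ∑ i : Fin n, b i • (WnPres n).gen i := by
  simp [wnBwdLin, LinearMap.sum_apply]

/-- backward map `Tn n → Wⁿ` -/
noncomputable def wnBwd (n : ℕ) : Tn n →+* (WnPres n).Carrier :=
  (TrivSqZeroExt.lift (Algebra.ofId ℕ _) (wnBwdLin n)
    (fun x y => by
      rw [wnBwdLin_apply, wnBwdLin_apply, Finset.sum_mul_sum]
      refine Finset.sum_eq_zero fun i _ => Finset.sum_eq_zero fun j _ => ?_
      have hg : (WnPres n).gen i * (WnPres n).gen j = 0 := (WnPres n).gen_mul trivial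
      rw [smul_mul_smul_comm, hg, smul_zero])
    (fun r x => by
      rw [map_smul, Algebra.smul_def]
      rfl)
    (fun r x => by
      rw [op_smul_eq_smul, map_smul, Algebra.smul_def, mul_comm]
      rfl)).toRingHom

lemma wnBwd_apply (n : ℕ) (x : Tn n) :
    wnBwd n x = algebraMap ℕ (WnPres n).Carrier (fst x) + wnBwdLin n (snd x) := rfl

lemma wnFwd_bwd (n : ℕ) (x : Tn n) : wnFwd n (wnBwd n x) = x := by
  rw [wnBwd_apply, map_add]
  have h1 : wnFwd n (algebraMap ℕ (WnPres n).Carrier (fst x)) = inl (fst x) := by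
    rw [Algebra.algebraMap_eq_smul_one, map_nsmul, map_one]
    rw [show ((fst x : ℕ) • (1 : Tn n)) = algebraMap ℕ (Tn n) (fst x) by
      rw [Algebra.algebraMap_eq_smul_one]]
    rfl
  have h2 : wnFwd n (wnBwdLin n (snd x)) = inr (snd x) := by
    rw [wnBwdLin_apply, map_sum]
    have : ∀ i : Fin n, wnFwd n (snd x i • (WnPres n).gen i) = inr (snd x i • Pi.single i 1) := by
      intro i
      rw [map_nsmul, wnFwd_gen]
      rfl
    rw [Finset.sum_congr rfl fun i _ => this i,
      show (∑ i : Fin n, inr (R := ℕ) (snd x i • Pi.single i 1)) =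
        inr (∑ i : Fin n, snd x i • Pi.single i (1:ℕ)) from
        (map_sum (inrHom ℕ (Fin n → ℕ)) _ _).symm]
    congr 1
    funext j
    simp [Finset.sum_apply, Pi.single_apply, Finset.sum_ite_eq']
  rw [h1, h2, inl_fst_add_inr_snd_eq]

lemma wnBwd_fwd (n : ℕ) : (wnBwd n).comp (wnFwd n) = RingHom.id _ := by
  apply (WnPres n).hom_ext
  intro (i : Fin n)
  rw [RingHom.comp_apply, wnFwd_gen n i, RingHom.id_apply]
  show wnBwd n (inr (Pi.single i 1)) = _
  have : wnBwd n (inr (Pi.single i 1)) = wnBwdLin n (Pi.single i 1) := by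
    rw [wnBwd_apply, fst_inr, map_zero, snd_inr, zero_add]
  rw [this, wnBwdLin_apply]
  simp [Pi.single_apply]
  exact (Finset.sum_eq_single i (fun b _ hb => if_neg hb) (fun h => absurd (Finset.mem_univ i) h)).trans (if_pos rfl)

/-- the ring equivalence `Wⁿ ≃+* Tn n` -/
noncomputable def wnEquiv (n : ℕ) : (WnPres n).Carrier ≃+* Tn n :=
  RingEquiv.ofRingHom (wnFwd n) (wnBwd n) (RingHom.ext (wnFwd_bwd n)) (wnBwd_fwd n)


/-- the k-th projection on the TrivSqZeroExt side -/
noncomputable def tProj (n : ℕ) (k : Fin n) : Tn n →+* Tn 1 :=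
  (TrivSqZeroExt.map (R' := ℕ) (LinearMap.pi fun _ : Fin 1 => LinearMap.proj k)).toRingHom

lemma tProj_fst (n : ℕ) (k : Fin n) (x : Tn n) : fst (tProj n k x) = fst x := fst_map _ x

lemma tProj_snd (n : ℕ) (k : Fin n) (x : Tn n) (j : Fin 1) :
    snd (tProj n k x) j = snd x k := by
  have : tProj n k x = TrivSqZeroExt.map (R' := ℕ) (LinearMap.pi fun _ : Fin 1 => LinearMap.proj k) x := rfl
  rw [this, snd_map]
  rfl

/-- the k-th projection `Wⁿ → W` -/
noncomputable def wProj (n : ℕ) (k : Fin n) : (WnPres n).Carrier →+* (WnPres 1).Carrier :=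
  ((wnEquiv 1).symm.toRingHom.comp (tProj n k)).comp (wnEquiv n).toRingHom

lemma wnEquiv_gen (n : ℕ) (i : Fin n) :
    wnEquiv n ((WnPres n).gen i) = inr (Pi.single i 1) := wnFwd_gen n i

lemma single_zero_fin1 : (Pi.single (0 : Fin 1) (1:ℕ)) = fun _ => 1 := by
  funext j
  rw [Subsingleton.elim j 0]
  simp

lemma wProj_gen (n : ℕ) (k i : Fin n) :
    wProj n k ((WnPres n).gen i) = if i = k then (WnPres 1).gen (0 : Fin 1) else 0 := by
  rw [wProj, RingHom.comp_apply, RingHom.comp_apply]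
  simp only [RingEquiv.toRingHom_eq_coe, RingHom.coe_coe]
  rw [wnEquiv_gen]
  have : tProj n k (inr (Pi.single i 1)) = if i = k then inr (R := ℕ) (Pi.single (0 : Fin 1) 1) else 0 := by
    apply TrivSqZeroExt.ext
    · rw [tProj_fst, fst_inr]
      split <;> simp
    · funext j
      rw [tProj_snd, snd_inr]
      rcases eq_or_ne i k with h | h
      · subst h; rw [if_pos rfl, snd_inr, single_zero_fin1]; simp [Pi.single_apply]
      · rw [if_neg h]; simp [Pi.single_apply, h]
  rw [this]
  rcases eq_or_ne i k with h | h
  · rw [if_pos h, if_pos h, ← wnEquiv_gen 1 0]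
    exact (wnEquiv 1).symm_apply_apply _
  · rw [if_neg h, if_neg h]; simp

/-- the augmentation of any Weil presentation -/
noncomputable def WeilPres.aug (Q : WeilPres) : Q.Carrier →+* ℕ :=
  Q.liftHom (MvPolynomial.eval₂Hom (RingHom.id ℕ) (fun _ => 0)) (fun i j _ => by simp)


lemma fst_inl_add_inr {M : Type*} [AddCommMonoid M] [Module ℕ M] [Module ℕᵐᵒᵖ M]
    (a : ℕ) (m : M) : fst (inl a + inr m : TrivSqZeroExt ℕ M) = a := by
  rw [fst_add, fst_inl, fst_inr, add_zero]

lemma snd_inl_add_inr {M : Type*} [AddCommMonoid M] [Module ℕ M] [Module ℕᵐᵒᵖ M]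
    (a : ℕ) (m : M) : snd (inl a + inr m : TrivSqZeroExt ℕ M) = m := by
  rw [snd_add, snd_inl, snd_inr, zero_add]

/-- the mediating hom on the TrivSqZeroExt side -/
noncomputable def midHom (n : ℕ) (Q : WeilPres) (g : Fin n → (Q.Carrier →+* Tn 1)) :
    Q.Carrier →+* Tn n where
  toFun q := inl (Q.aug q) + inr (fun k => snd (g k q) 0)
  map_one' := by
    have h0 : (fun k : Fin n => snd (g k 1) 0) = 0 :=
      funext fun k => by rw [map_one, snd_one]; rfl
    show inl (Q.aug 1) + inr (fun k => snd (g k 1) 0) = 1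
    rw [map_one, h0, inr_zero, add_zero, inl_one]
  map_zero' := by
    have h0 : (fun k : Fin n => snd (g k 0) 0) = 0 :=
      funext fun k => by rw [map_zero, snd_zero]; rfl
    show inl (Q.aug 0) + inr (fun k => snd (g k 0) 0) = 0
    rw [map_zero, h0, inr_zero, add_zero, inl_zero]
  map_add' p q := by
    show inl (Q.aug (p + q)) + inr (fun k => snd (g k (p + q)) 0) =
      (inl (Q.aug p) + inr fun k => snd (g k p) 0) +
        (inl (Q.aug q) + inr fun k => snd (g k q) 0)
    apply TrivSqZeroExt.ext
    · rw [fst_inl_add_inr, fst_add, fst_inl_add_inr, fst_inl_add_inr, map_add]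
    · rw [snd_inl_add_inr, snd_add, snd_inl_add_inr, snd_inl_add_inr]
      funext k
      simp [map_add]
  map_mul' p q := by
    show inl (Q.aug (p * q)) + inr (fun k => snd (g k (p * q)) 0) =
      (inl (Q.aug p) + inr fun k => snd (g k p) 0) *
        (inl (Q.aug q) + inr fun k => snd (g k q) 0)
    have haug : ∀ (k : Fin n) (x : Q.Carrier), fst (g k x) = Q.aug x := by
      intro k x
      exact RingHom.congr_fun
        (Q.hom_nat_unique ((fstHom ℕ ℕ (Fin 1 → ℕ)).toRingHom.comp (g k)) Q.aug) x
    apply TrivSqZeroExt.ext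
    · rw [fst_inl_add_inr, fst_mul, fst_inl_add_inr, fst_inl_add_inr, map_mul]
    · rw [snd_inl_add_inr, snd_mul, fst_inl_add_inr, fst_inl_add_inr,
        snd_inl_add_inr, snd_inl_add_inr, op_smul_eq_smul]
      funext k
      rw [map_mul, snd_mul, op_smul_eq_smul]
      simp only [Pi.add_apply, Pi.smul_apply, smul_eq_mul, haug]

lemma midHom_fst (n : ℕ) (Q : WeilPres) (g : Fin n → (Q.Carrier →+* Tn 1)) (q : Q.Carrier) :
    fst (midHom n Q g q) = Q.aug q := fst_inl_add_inr _ _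

lemma midHom_snd (n : ℕ) (Q : WeilPres) (g : Fin n → (Q.Carrier →+* Tn 1)) (q : Q.Carrier)
    (k : Fin n) : snd (midHom n Q g q) k = snd (g k q) 0 := by
  have := snd_inl_add_inr (M := Fin n → ℕ) (Q.aug q) (fun k => snd (g k q) 0)
  exact congrFun this k


/-- `Wⁿ = ℕ[x₁,…,xₙ]/(xᵢxⱼ)`, together with the `n` projections to `W = ℕ[x]/(x²)`
(sending `x_k ↦ x` and the other generators to `0`), is the product of `n` copies of `W`
in the category `Weil`. -/
theorem wn_is_product (n : ℕ) :
    ∃ π : Fin n → ((WnPres n).Carrier →+* (WnPres 1).Carrier),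
      (∀ k i : Fin n, π k ((WnPres n).gen i) = if i = k then (WnPres 1).gen (0 : Fin 1) else 0) ∧
      ∀ (Q : WeilPres) (f : Fin n → (Q.Carrier →+* (WnPres 1).Carrier)),
        ∃! h : Q.Carrier →+* (WnPres n).Carrier, ∀ k, (π k).comp h = f k := by
  refine ⟨wProj n, fun k i => wProj_gen n k i, ?_⟩
  intro Q f
  set g : Fin n → (Q.Carrier →+* Tn 1) := fun k => (wnEquiv 1).toRingHom.comp (f k) with hg
  have haug : ∀ (k : Fin n) (x : Q.Carrier), fst (g k x) = Q.aug x := fun k x =>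
    RingHom.congr_fun
      (Q.hom_nat_unique ((fstHom ℕ ℕ (Fin 1 → ℕ)).toRingHom.comp (g k)) Q.aug) x
  refine ⟨(wnEquiv n).symm.toRingHom.comp (midHom n Q g), ?_, ?_⟩
  · intro k
    ext q
    show wProj n k ((wnEquiv n).symm (midHom n Q g q)) = f k q
    rw [wProj]
    show (wnEquiv 1).symm (tProj n k ((wnEquiv n) ((wnEquiv n).symm (midHom n Q g q)))) = f k q
    rw [(wnEquiv n).apply_symm_apply]
    have hkey : tProj n k (midHom n Q g q) = g k q := by
      apply TrivSqZeroExt.ext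
      · rw [tProj_fst, midHom_fst, haug]
      · funext j
        rw [tProj_snd, midHom_snd]
        exact congrArg (snd (g k q)) (Subsingleton.elim 0 j)
    rw [hkey]
    show (wnEquiv 1).symm ((wnEquiv 1) (f k q)) = f k q
    exact (wnEquiv 1).symm_apply_apply _
  · intro h' hh'
    have key : (wnEquiv n).toRingHom.comp h' = midHom n Q g := by
      apply RingHom.ext
      intro q
      show (wnEquiv n) (h' q) = midHom n Q g q
      apply TrivSqZeroExt.ext
      · have u := Q.hom_nat_unique
          ((fstHom ℕ ℕ (Fin n → ℕ)).toRingHom.comp ((wnEquiv n).toRingHom.comp h')) Q.aug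
        have hq := RingHom.congr_fun u q
        rw [midHom_fst]
        exact hq
      · funext k
        have hk : wProj n k (h' q) = f k q := RingHom.congr_fun (hh' k) q
        have hk' : (wnEquiv 1).symm (tProj n k ((wnEquiv n) (h' q))) = f k q := hk
        have e1k : tProj n k ((wnEquiv n) (h' q)) = g k q := by
          calc tProj n k ((wnEquiv n) (h' q))
              = (wnEquiv 1) ((wnEquiv 1).symm (tProj n k ((wnEquiv n) (h' q)))) :=
                ((wnEquiv 1).apply_symm_apply _).symm
            _ = (wnEquiv 1) (f k q) := congrArg _ hk'
            _ = g k q := rfl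
        rw [midHom_snd, ← e1k, tProj_snd]
    ext q
    have hq := RingHom.congr_fun key q
    show h' q = (wnEquiv n).symm (midHom n Q g q)
    calc h' q = (wnEquiv n).symm ((wnEquiv n) (h' q)) := ((wnEquiv n).symm_apply_apply _).symm
      _ = (wnEquiv n).symm (midHom n Q g q) := congrArg _ hq
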